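/- Let f, g : ℝ → ℝ be such that f − 1 and g − 1 are differentiable and square-integrable with square-integrable derivatives. Then lim_{y → +∞} ‖f − g(· + y)‖_{H¹}² = ‖f − 1‖_{H¹}² + ‖g − 1‖_{H¹}², and the same limit holds as y → −∞. -/

import Mathlib

open MeasureTheory Filter Topology

/-- The squared `H¹(ℝ)` norm, `‖u‖_{H¹}² = ∫ u² + ∫ (u')²`. -/
noncomputable def H1normSq (u : ℝ → ℝ) : ℝ :=
  (∫ x : ℝ, (u x) ^ 2) + ∫ x : ℝ, (deriv u x) ^ 2


section AuxH1
open Set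

/-- Tail of an integrable function over `Ioi t` tends to `0` as `t → ∞`. -/
lemma tail_Ioi {h : ℝ → ℝ} (hi : Integrable h) :
    Tendsto (fun t : ℝ => ∫ x in Ioi t, h x) atTop (𝓝 0) := by
  have key : Tendsto (fun t : ℝ => ∫ x, (Ioi t).indicator h x) atTop (𝓝 (∫ _ : ℝ, (0:ℝ))) := by
    apply tendsto_integral_filter_of_dominated_convergence (fun x => ‖h x‖)
    · exact Eventually.of_forall fun t =>
        hi.aestronglyMeasurable.indicator measurableSet_Ioi
    · exact Eventually.of_forall fun t =>
        Eventually.of_forall fun x => norm_indicator_le_norm_self h x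
    · exact hi.norm
    · refine Eventually.of_forall fun x => ?_
      refine tendsto_const_nhds.congr' ?_
      filter_upwards [eventually_ge_atTop x] with t ht
      simp [Set.indicator_of_notMem, not_lt.2 ht]
  simp only [integral_indicator measurableSet_Ioi, integral_zero] at key
  exact key

/-- Tail of an integrable function over `Iic t` tends to `0` as `t → -∞`. -/
lemma tail_Iic {h : ℝ → ℝ} (hi : Integrable h) :
    Tendsto (fun t : ℝ => ∫ x in Iic t, h x) atBot (𝓝 0) := by
  have key : Tendsto (fun t : ℝ => ∫ x, (Iic t).indicator h x) atBot (𝓝 (∫ _ : ℝ, (0:ℝ))) := by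
    apply tendsto_integral_filter_of_dominated_convergence (fun x => ‖h x‖)
    · exact Eventually.of_forall fun t =>
        hi.aestronglyMeasurable.indicator measurableSet_Iic
    · exact Eventually.of_forall fun t =>
        Eventually.of_forall fun x => norm_indicator_le_norm_self h x
    · exact hi.norm
    · refine Eventually.of_forall fun x => ?_
      refine tendsto_const_nhds.congr' ?_
      filter_upwards [eventually_lt_atBot x] with t ht
      simp [Set.indicator_of_notMem, not_le.2 ht]
  simp only [integral_indicator measurableSet_Iic, integral_zero] at key
  exact key

/-- Shifting a set integral over `Ioi`. -/
lemma setIntegral_Ioi_comp_add (h : ℝ → ℝ) (a y : ℝ) :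
    ∫ x in Ioi a, h (x + y) = ∫ x in Ioi (a + y), h x := by
  rw [← integral_indicator measurableSet_Ioi, ← integral_indicator measurableSet_Ioi,
    ← integral_add_right_eq_self (fun x => (Ioi (a + y)).indicator h x) y]
  congr 1
  funext x
  simp only [Set.indicator_apply, mem_Ioi, add_lt_add_iff_right]

lemma int_mul_shift {F G : ℝ → ℝ} (hFm : AEStronglyMeasurable F volume)
    (hGm : AEStronglyMeasurable G volume)
    (hF2 : Integrable (fun x => F x ^ 2)) (hG2 : Integrable (fun x => G x ^ 2)) (y : ℝ) :
    Integrable (fun x => F x * G (x + y)) := by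
  have hFm2 : MemLp F 2 (volume : Measure ℝ) := (memLp_two_iff_integrable_sq hFm).2 hF2
  have hGym : AEStronglyMeasurable (fun x => G (x + y)) volume :=
    hGm.comp_measurePreserving (measurePreserving_add_right volume y)
  have hGy2 : Integrable (fun x => G (x + y) ^ 2) := by
    simpa using (hG2.comp_add_right y)
  have hGym2 : MemLp (fun x => G (x + y)) 2 (volume : Measure ℝ) :=
    (memLp_two_iff_integrable_sq hGym).2 hGy2
  have h := hGym2.smul hFm2 (p := 2) (q := 2) (r := 1)
  have := memLp_one_iff_integrable.1 h
  exact this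

lemma norm_rpow_two (u : ℝ) : ‖u‖ ^ (2:ℝ) = u ^ 2 := by
  rw [show (2:ℝ) = ((2:ℕ):ℝ) by norm_num, Real.rpow_natCast, Real.norm_eq_abs, sq_abs]

lemma cross_atTop {F G : ℝ → ℝ} (hFm : AEStronglyMeasurable F volume)
    (hGm : AEStronglyMeasurable G volume)
    (hF2 : Integrable (fun x => F x ^ 2)) (hG2 : Integrable (fun x => G x ^ 2)) :
    Tendsto (fun y : ℝ => ∫ x : ℝ, F x * G (x + y)) atTop (𝓝 0) := by
  have hpq : Real.HolderConjugate 2 2 := Real.HolderConjugate.two_two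
  have he2 : ENNReal.ofReal (2:ℝ) = 2 := by norm_num
  have hFm2 : MemLp F 2 (volume : Measure ℝ) := (memLp_two_iff_integrable_sq hFm).2 hF2
  have hGym : ∀ y : ℝ, AEStronglyMeasurable (fun x => G (x + y)) volume := fun y =>
    hGm.comp_measurePreserving (measurePreserving_add_right volume y)
  have hGy2 : ∀ y : ℝ, Integrable (fun x => G (x + y) ^ 2) := fun y => by
    simpa using (hG2.comp_add_right y)
  have hGym2 : ∀ y : ℝ, MemLp (fun x => G (x + y)) 2 (volume : Measure ℝ) := fun y =>
    (memLp_two_iff_integrable_sq (hGym y)).2 (hGy2 y)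
  -- Hölder bound on a set
  have holder : ∀ (y : ℝ) (s : Set ℝ),
      |∫ x in s, F x * G (x + y)| ≤
        Real.sqrt (∫ x in s, F x ^ 2) * Real.sqrt (∫ x in s, G (x + y) ^ 2) := by
    intro y s
    have hFr : MemLp F (ENNReal.ofReal 2) (volume.restrict s) := by
      rw [he2]; exact hFm2.restrict s
    have hGr : MemLp (fun x => G (x + y)) (ENNReal.ofReal 2) (volume.restrict s) := by
      rw [he2]; exact (hGym2 y).restrict s
    have h1 : |∫ x in s, F x * G (x + y)| ≤ ∫ x in s, ‖F x‖ * ‖G (x + y)‖ := by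
      rw [← Real.norm_eq_abs]
      refine (norm_integral_le_integral_norm _).trans_eq ?_
      simp [norm_mul]
    have h2 := integral_mul_norm_le_Lp_mul_Lq (μ := volume.restrict s) hpq hFr hGr
    simp only [norm_rpow_two] at h2
    calc |∫ x in s, F x * G (x + y)| ≤ ∫ x in s, ‖F x‖ * ‖G (x + y)‖ := h1
      _ ≤ (∫ x in s, F x ^ 2) ^ (1/2:ℝ) * (∫ x in s, G (x + y) ^ 2) ^ (1/2:ℝ) := h2
      _ = _ := by rw [← Real.sqrt_eq_rpow, ← Real.sqrt_eq_rpow]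
  -- global bound
  have bound : ∀ y : ℝ,
      |∫ x : ℝ, F x * G (x + y)| ≤
        Real.sqrt (∫ x in Iic (-(y/2)), F x ^ 2) * Real.sqrt (∫ x : ℝ, G x ^ 2) +
        Real.sqrt (∫ x : ℝ, F x ^ 2) * Real.sqrt (∫ x in Ioi (y/2), G x ^ 2) := by
    intro y
    have hprod := int_mul_shift hFm hGm hF2 hG2 y
    have hsplit : (∫ x : ℝ, F x * G (x + y)) =
        (∫ x in Iic (-(y/2)), F x * G (x + y)) + ∫ x in Ioi (-(y/2)), F x * G (x + y) := by
      rw [← compl_Iic, integral_add_compl measurableSet_Iic hprod]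
    have tA : |∫ x in Iic (-(y/2)), F x * G (x + y)| ≤
        Real.sqrt (∫ x in Iic (-(y/2)), F x ^ 2) * Real.sqrt (∫ x : ℝ, G x ^ 2) := by
      refine (holder y _).trans ?_
      refine mul_le_mul_of_nonneg_left (Real.sqrt_le_sqrt ?_) (Real.sqrt_nonneg _)
      calc (∫ x in Iic (-(y/2)), G (x + y) ^ 2) ≤ ∫ x : ℝ, G (x + y) ^ 2 :=
            setIntegral_le_integral (hGy2 y) (Eventually.of_forall fun x => sq_nonneg _)
        _ = ∫ x : ℝ, G x ^ 2 := integral_add_right_eq_self (fun x => G x ^ 2) y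
    have tB : |∫ x in Ioi (-(y/2)), F x * G (x + y)| ≤
        Real.sqrt (∫ x : ℝ, F x ^ 2) * Real.sqrt (∫ x in Ioi (y/2), G x ^ 2) := by
      refine (holder y _).trans ?_
      have hshift : (∫ x in Ioi (-(y/2)), G (x + y) ^ 2) = ∫ x in Ioi (y/2), G x ^ 2 := by
        rw [setIntegral_Ioi_comp_add (fun x => G x ^ 2) (-(y/2)) y,
          show -(y/2) + y = y/2 by ring]
      rw [hshift]
      refine mul_le_mul_of_nonneg_right (Real.sqrt_le_sqrt ?_) (Real.sqrt_nonneg _)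
      exact setIntegral_le_integral hF2 (Eventually.of_forall fun x => sq_nonneg _)
    calc |∫ x : ℝ, F x * G (x + y)| ≤
        |∫ x in Iic (-(y/2)), F x * G (x + y)| + |∫ x in Ioi (-(y/2)), F x * G (x + y)| := by
          rw [hsplit]; exact abs_add_le _ _
      _ ≤ _ := add_le_add tA tB
  -- the bound tends to zero
  have tF : Tendsto (fun y : ℝ => ∫ x in Iic (-(y/2)), F x ^ 2) atTop (𝓝 0) := by
    refine (tail_Iic hF2).comp ?_
    exact tendsto_neg_atBot_iff.mpr (tendsto_id.atTop_div_const two_pos)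
  have tG : Tendsto (fun y : ℝ => ∫ x in Ioi (y/2), G x ^ 2) atTop (𝓝 0) := by
    exact (tail_Ioi hG2).comp (tendsto_id.atTop_div_const two_pos)
  have tFs : Tendsto (fun y : ℝ => Real.sqrt (∫ x in Iic (-(y/2)), F x ^ 2)) atTop (𝓝 0) := by
    have := (Real.continuous_sqrt.tendsto 0).comp tF
    simpa [Function.comp_def] using this
  have tGs : Tendsto (fun y : ℝ => Real.sqrt (∫ x in Ioi (y/2), G x ^ 2)) atTop (𝓝 0) := by
    have := (Real.continuous_sqrt.tendsto 0).comp tG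
    simpa [Function.comp_def] using this
  have tbound : Tendsto (fun y : ℝ =>
      Real.sqrt (∫ x in Iic (-(y/2)), F x ^ 2) * Real.sqrt (∫ x : ℝ, G x ^ 2) +
      Real.sqrt (∫ x : ℝ, F x ^ 2) * Real.sqrt (∫ x in Ioi (y/2), G x ^ 2)) atTop (𝓝 0) := by
    have := (tFs.mul_const (Real.sqrt (∫ x : ℝ, G x ^ 2))).add
      (tGs.const_mul (Real.sqrt (∫ x : ℝ, F x ^ 2)))
    simpa using this
  exact (tendsto_zero_iff_abs_tendsto_zero _).2
    (squeeze_zero (fun y => abs_nonneg _) bound tbound)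

lemma cross_atBot {F G : ℝ → ℝ} (hFm : AEStronglyMeasurable F volume)
    (hGm : AEStronglyMeasurable G volume)
    (hF2 : Integrable (fun x => F x ^ 2)) (hG2 : Integrable (fun x => G x ^ 2)) :
    Tendsto (fun y : ℝ => ∫ x : ℝ, F x * G (x + y)) atBot (𝓝 0) := by
  have hFm' : AEStronglyMeasurable (fun x => F (-x)) volume :=
    hFm.comp_measurePreserving (Measure.measurePreserving_neg volume)
  have hGm' : AEStronglyMeasurable (fun x => G (-x)) volume :=
    hGm.comp_measurePreserving (Measure.measurePreserving_neg volume)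
  have hF2' : Integrable (fun x => F (-x) ^ 2) := by simpa using hF2.comp_neg
  have hG2' : Integrable (fun x => G (-x) ^ 2) := by simpa using hG2.comp_neg
  have h := cross_atTop hFm' hGm' hF2' hG2'
  have hcomp : Tendsto (fun y : ℝ => ∫ x : ℝ, F (-x) * G (-(x + -y))) atBot (𝓝 0) :=
    h.comp tendsto_neg_atBot_atTop
  refine hcomp.congr fun y => ?_
  have e : ∀ x : ℝ, -(x + -y) = -x + y := fun x => by ring
  simp_rw [e]
  exact integral_neg_eq_self (fun u => F u * G (u + y)) volume

lemma expand_sq {F G : ℝ → ℝ} (hFm : AEStronglyMeasurable F volume)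
    (hGm : AEStronglyMeasurable G volume)
    (hF2 : Integrable (fun x => F x ^ 2)) (hG2 : Integrable (fun x => G x ^ 2)) (y : ℝ) :
    (∫ x : ℝ, (F x - G (x + y)) ^ 2) =
      ((∫ x : ℝ, F x ^ 2) + ∫ x : ℝ, G x ^ 2) - 2 * ∫ x : ℝ, F x * G (x + y) := by
  have hGy2 : Integrable (fun x => G (x + y) ^ 2) := by simpa using hG2.comp_add_right y
  have hprod := int_mul_shift hFm hGm hF2 hG2 y
  have h : ∀ x : ℝ, (F x - G (x + y)) ^ 2
      = (F x ^ 2 + G (x + y) ^ 2) - 2 * (F x * G (x + y)) := fun x => by ring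
  simp_rw [h]
  have hsum : Integrable (fun x => F x ^ 2 + G (x + y) ^ 2) := hF2.add hGy2
  rw [integral_sub hsum (hprod.const_mul 2), integral_add hF2 hGy2,
    integral_const_mul, integral_add_right_eq_self (fun x => G x ^ 2) y]

end AuxH1

/-- if `f - 1` and `g - 1` are `H¹`, then
`‖f - g(·+y)‖_{H¹}² → ‖f-1‖_{H¹}² + ‖g-1‖_{H¹}²` as `y → ±∞`. -/
theorem stmt_7 (f g : ℝ → ℝ)
    (hf : Differentiable ℝ (fun x => f x - 1))
    (hf1 : Integrable (fun x => (f x - 1) ^ 2))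
    (hf2 : Integrable (fun x => (deriv (fun y => f y - 1) x) ^ 2))
    (hg : Differentiable ℝ (fun x => g x - 1))
    (hg1 : Integrable (fun x => (g x - 1) ^ 2))
    (hg2 : Integrable (fun x => (deriv (fun y => g y - 1) x) ^ 2)) :
    Tendsto (fun y : ℝ => H1normSq (fun x => f x - g (x + y))) atTop
      (𝓝 (H1normSq (fun x => f x - 1) + H1normSq (fun x => g x - 1))) ∧
    Tendsto (fun y : ℝ => H1normSq (fun x => f x - g (x + y))) atBot
      (𝓝 (H1normSq (fun x => f x - 1) + H1normSq (fun x => g x - 1))) := by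
  have hfd : Differentiable ℝ f := by simpa using hf.add_const 1
  have hgd : Differentiable ℝ g := by simpa using hg.add_const 1
  have hFm : AEStronglyMeasurable (fun x => f x - 1) volume :=
    hf.continuous.aestronglyMeasurable
  have hGm : AEStronglyMeasurable (fun x => g x - 1) volume :=
    hg.continuous.aestronglyMeasurable
  have hF'm : AEStronglyMeasurable (deriv (fun t => f t - 1)) volume :=
    (measurable_deriv _).aestronglyMeasurable
  have hG'm : AEStronglyMeasurable (deriv (fun t => g t - 1)) volume :=
    (measurable_deriv _).aestronglyMeasurable
  have eD : ∀ y x : ℝ, deriv (fun x => f x - g (x + y)) x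
      = deriv (fun t => f t - 1) x - deriv (fun t => g t - 1) (x + y) := by
    intro y x
    have h1 : HasDerivAt f (deriv (fun t => f t - 1) x) x := by
      rw [deriv_sub_const]
      exact (hfd x).hasDerivAt
    have h2 : HasDerivAt (fun x => g (x + y)) (deriv (fun t => g t - 1) (x + y)) x := by
      have hg' : HasDerivAt g (deriv g (x + y)) (x + y) := (hgd (x + y)).hasDerivAt
      have := HasDerivAt.comp x hg' ((hasDerivAt_id x).add_const y)
      simpa [Function.comp_def, deriv_sub_const] using this
    exact (h1.sub h2).deriv
  have hkey : ∀ y : ℝ, H1normSq (fun x => f x - g (x + y)) =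
      ((((∫ x : ℝ, (f x - 1) ^ 2) + ∫ x : ℝ, (g x - 1) ^ 2)
          - 2 * ∫ x : ℝ, (f x - 1) * (g (x + y) - 1))
        + (((∫ x : ℝ, (deriv (fun t => f t - 1) x) ^ 2)
            + ∫ x : ℝ, (deriv (fun t => g t - 1) x) ^ 2)
          - 2 * ∫ x : ℝ, (deriv (fun t => f t - 1) x) * (deriv (fun t => g t - 1) (x + y)))) := by
    intro y
    simp only [H1normSq]
    congr 1
    · have e : ∀ x : ℝ, f x - g (x + y) = (f x - 1) - (g (x + y) - 1) := fun x => by ring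
      simp_rw [e]
      exact expand_sq hFm hGm hf1 hg1 y
    · have e : (fun x : ℝ => (deriv (fun x => f x - g (x + y)) x) ^ 2)
          = fun x => ((deriv (fun t => f t - 1) x) - (deriv (fun t => g t - 1) (x + y))) ^ 2 :=
        funext fun x => by rw [eD y x]
      rw [e]
      exact expand_sq hF'm hG'm hf2 hg2 y
  have c1t := cross_atTop hFm hGm hf1 hg1
  have c1b := cross_atBot hFm hGm hf1 hg1
  have c2t := cross_atTop hF'm hG'm hf2 hg2
  have c2b := cross_atBot hF'm hG'm hf2 hg2
  have hpt : H1normSq (fun x => f x - 1) + H1normSq (fun x => g x - 1)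
      = ((((∫ x : ℝ, (f x - 1) ^ 2) + ∫ x : ℝ, (g x - 1) ^ 2) - 2 * 0)
        + (((∫ x : ℝ, (deriv (fun t => f t - 1) x) ^ 2)
            + ∫ x : ℝ, (deriv (fun t => g t - 1) x) ^ 2) - 2 * 0)) := by
    simp only [H1normSq, mul_zero, sub_zero]
    ring
  constructor
  · rw [hpt]
    exact (((tendsto_const_nhds.sub (c1t.const_mul 2)).add
      (tendsto_const_nhds.sub (c2t.const_mul 2)))).congr fun y => (hkey y).symm
  · rw [hpt]
    exact (((tendsto_const_nhds.sub (c1b.const_mul 2)).add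
      (tendsto_const_nhds.sub (c2b.const_mul 2)))).congr fun y => (hkey y).symm
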